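/- arXiv:1011.3012 — 3 statements merged into one kernel-verified Lean document; each statement's English description precedes it below -/
import Mathlib

section
/- Let w be a K-quasiconformal mapping differentiable a.e. with |Δw| ≤ B|∇w|² in the weak sense on a region where the distance function d to ∂Ω is C^{1,1} with |∇d| = 1 and the curvature bound |κ| ≤ κ₀ holds with d < 1/(2κ₀). Then χ = −d∘w satisfies |Δχ| ≤ (2κ₀ + B)K²|∇χ|², pointwise wherever the identity Δχ = (κ/(1−κd))|(O∇w)ᵀe₁|² − ⟨∇d(w), Δw⟩ holds. -/
open scoped RealInnerProductSpace

/-- Pointwise bound `|Δχ| ≤ (2κ₀ + B)K²|∇χ|²` for `χ = -d ∘ w`, at a point where the identity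
`Δχ = (κ/(1-κd))|(O∇w)ᵀe₁|² - ⟨∇d(w), Δw⟩` holds. Here `κ` is the boundary curvature at the
nearest point (`|κ| ≤ κ₀`), `dval = d(w z) < 1/(2κ₀)`, `g = ∇d(w z)` is a unit vector,
`Δw` satisfies `|Δw| ≤ B|∇w|²`, `t = |(O∇w)ᵀe₁| ≤ |∇w| = Nw`, and quasiconformality gives
`Nw ≤ K·Nχ` with `Nχ = |∇χ|`. -/
theorem stmt9 (κ κ₀ B K dval Lχ t Nw Nχ : ℝ)
    (g Δw : EuclideanSpace ℝ (Fin 2))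
    (hκ : |κ| ≤ κ₀) (hκ₀ : 0 < κ₀) (hB : 0 ≤ B) (hK : 1 ≤ K)
    (hd0 : 0 ≤ dval) (hd : dval < 1 / (2 * κ₀))
    (hg : ‖g‖ = 1)
    (hΔw : ‖Δw‖ ≤ B * Nw ^ 2)
    (ht : |t| ≤ Nw) (hNw : 0 ≤ Nw)
    (hqc : Nw ≤ K * Nχ)
    (hid : Lχ = κ / (1 - κ * dval) * t ^ 2 - ⟪g, Δw⟫) :
    |Lχ| ≤ (2 * κ₀ + B) * K ^ 2 * Nχ ^ 2 := by
  have hκd : |κ * dval| < 1 / 2 := by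
    calc |κ * dval| = |κ| * dval := by rw [abs_mul, abs_of_nonneg hd0]
    _ ≤ κ₀ * dval := by nlinarith
    _ < 1 / 2 := by
        have : κ₀ * dval < κ₀ * (1 / (2 * κ₀)) := by
          exact mul_lt_mul_of_pos_left hd hκ₀
        rw [mul_one_div] at this
        calc κ₀ * dval < κ₀ / (2 * κ₀) := this
        _ = 1 / 2 := by field_simp
  have hden : (1:ℝ) / 2 ≤ 1 - κ * dval := by
    have := abs_lt.mp hκd; linarith [this.1, this.2]
  have hdenpos : (0:ℝ) < 1 - κ * dval := by linarith
  have hfrac : |κ / (1 - κ * dval)| ≤ 2 * κ₀ := by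
    rw [abs_div, abs_of_pos hdenpos, div_le_iff₀ hdenpos]
    nlinarith
  have hinner : |⟪g, Δw⟫| ≤ B * Nw ^ 2 := by
    calc |⟪g, Δw⟫| ≤ ‖g‖ * ‖Δw‖ := abs_real_inner_le_norm g Δw
    _ = ‖Δw‖ := by rw [hg, one_mul]
    _ ≤ B * Nw ^ 2 := hΔw
  have ht2 : t ^ 2 ≤ Nw ^ 2 := by nlinarith [sq_abs t, mul_self_le_mul_self (abs_nonneg t) ht]
  have hNχ : 0 ≤ Nχ := by nlinarith
  have hNwK : Nw ^ 2 ≤ K ^ 2 * Nχ ^ 2 := by nlinarith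
  have h1 : |Lχ| ≤ (2 * κ₀ + B) * Nw ^ 2 := by
    rw [hid]
    calc |κ / (1 - κ * dval) * t ^ 2 - ⟪g, Δw⟫|
        ≤ |κ / (1 - κ * dval) * t ^ 2| + |⟪g, Δw⟫| := abs_sub _ _
    _ = |κ / (1 - κ * dval)| * t ^ 2 + |⟪g, Δw⟫| := by
        rw [abs_mul, abs_of_nonneg (sq_nonneg t)]
    _ ≤ 2 * κ₀ * Nw ^ 2 + B * Nw ^ 2 := by
        have h0 : (0:ℝ) ≤ |κ / (1 - κ * dval)| := abs_nonneg _
        nlinarith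
    _ = (2 * κ₀ + B) * Nw ^ 2 := by ring
  calc |Lχ| ≤ (2 * κ₀ + B) * Nw ^ 2 := h1
  _ ≤ (2 * κ₀ + B) * (K ^ 2 * Nχ ^ 2) := by nlinarith
  _ = (2 * κ₀ + B) * K ^ 2 * Nχ ^ 2 := by ring
end

section
/- Let w be a sense-preserving harmonic diffeomorphism of the unit disk such that w ∈ C¹ of the closed disk and there is a constant c > 0 with ||w_z(t)| − |w_{z̄}(t)|| ≥ c for every t on the unit circle. Then ||w_z(z)| − |w_{z̄}(z)|| ≥ c for every z in the open disk. -/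
open Metric

/-- Let `w = g + h̄` be a sense-preserving harmonic diffeomorphism of the unit disk, `C¹` up to
the closed disk (so `w_z = g'` and `w_z̄ = h̄'` extend continuously, as `gz`, `hz`), with
`||w_z(t)| - |w_z̄(t)|| ≥ c > 0` on the unit circle. Then `||w_z| - |w_z̄|| ≥ c` on the disk. -/
theorem stmt11 (g h gz hz w : ℂ → ℂ) (c : ℝ) (hc : 0 < c)
    (hg : DifferentiableOn ℂ g (ball (0 : ℂ) 1)) (hh : DifferentiableOn ℂ h (ball (0 : ℂ) 1))
    (hw : ∀ z ∈ ball (0 : ℂ) 1, w z = g z + (starRingEnd ℂ) (h z))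
    (hwC1 : ContDiffOn ℝ 1 w (closedBall (0 : ℂ) 1))
    (hgzc : ContinuousOn gz (closedBall (0 : ℂ) 1))
    (hhzc : ContinuousOn hz (closedBall (0 : ℂ) 1))
    (hgz : ∀ z ∈ ball (0 : ℂ) 1, gz z = deriv g z)
    (hhz : ∀ z ∈ ball (0 : ℂ) 1, hz z = deriv h z)
    (hsense : ∀ z ∈ ball (0 : ℂ) 1, ‖hz z‖ < ‖gz z‖)
    (hinj : Set.InjOn w (ball (0 : ℂ) 1))
    (hbd : ∀ t : ℂ, ‖t‖ = 1 → c ≤ |‖gz t‖ - ‖hz t‖|) :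
    ∀ z ∈ ball (0 : ℂ) 1, c ≤ |‖gz z‖ - ‖hz z‖| := by
  have hclos : closure (ball (0 : ℂ) 1) = closedBall (0 : ℂ) 1 := closure_ball 0 one_ne_zero
  -- boundary lower bound without absolute value
  have hbd' : ∀ t : ℂ, ‖t‖ = 1 → c ≤ ‖gz t‖ - ‖hz t‖ := by
    intro t ht
    have htc : t ∈ closedBall (0 : ℂ) 1 := by
      simp [mem_closedBall, dist_eq_norm, ht]
    have htcl : t ∈ closure (ball (0 : ℂ) 1) := by rw [hclos]; exact htc
    have hcont : ContinuousWithinAt (fun x => ‖gz x‖ - ‖hz x‖) (ball (0 : ℂ) 1) t := by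
      have : ContinuousWithinAt (fun x => ‖gz x‖ - ‖hz x‖) (closedBall (0 : ℂ) 1) t :=
        ((hgzc.norm.sub hhzc.norm) t htc)
      exact this.mono ball_subset_closedBall
    have hnb : (nhdsWithin t (ball (0 : ℂ) 1)).NeBot := mem_closure_iff_nhdsWithin_neBot.mp htcl
    have h0 : 0 ≤ ‖gz t‖ - ‖hz t‖ := by
      refine ge_of_tendsto hcont ?_
      filter_upwards [self_mem_nhdsWithin] with x hx
      exact sub_nonneg.mpr (hsense x hx).le
    have := hbd t ht
    rcases abs_cases (‖gz t‖ - ‖hz t‖) with ⟨he, _⟩ | ⟨he, hneg⟩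
    · rwa [he] at this
    · linarith [this, he]
  -- gz is nonzero on the closed ball
  have hgzne : ∀ x ∈ closedBall (0 : ℂ) 1, gz x ≠ 0 := by
    intro x hx
    rcases lt_or_eq_of_le (mem_closedBall_iff_norm.mp hx) with hlt | heq
    · have hxb : x ∈ ball (0 : ℂ) 1 := by simpa [mem_ball, dist_eq_norm] using hlt
      have := hsense x hxb
      intro h0; rw [h0, norm_zero] at this
      exact absurd this (not_lt.mpr (norm_nonneg _))
    · have hx1 : ‖x‖ = 1 := by simpa using heq
      have := hbd' x hx1
      intro h0; rw [h0, norm_zero] at this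
      linarith [norm_nonneg (hz x)]
  intro z hzb
  -- choose a unimodular u aligned with hz z
  set a := hz z with ha
  have hau : ∃ u : ℂ, ‖u‖ = 1 ∧ ‖a + (c : ℂ) * u‖ = ‖a‖ + c := by
    by_cases h0 : a = 0
    · exact ⟨1, by simp, by simp [h0, hc.le]⟩
    · refine ⟨a / ‖a‖, ?_, ?_⟩
      · simp [norm_div, h0]
      · have hna : (‖a‖ : ℂ) ≠ 0 := by
          exact_mod_cast norm_ne_zero_iff.mpr h0
        have e : a + (c : ℂ) * (a / (‖a‖ : ℂ)) = ((‖a‖ + c : ℝ) : ℂ) * a / (‖a‖ : ℂ) := by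
          push_cast
          rw [mul_div_assoc, add_mul, mul_comm ((‖a‖ : ℂ)) (a / (‖a‖ : ℂ)),
            div_mul_cancel₀ _ hna]
        have hapos : 0 < ‖a‖ := norm_pos_iff.mpr h0
        rw [e, norm_div, norm_mul, Complex.norm_real, Complex.norm_real,
          Real.norm_eq_abs, Real.norm_eq_abs, abs_of_nonneg (by positivity : (0:ℝ) ≤ ‖a‖ + c),
          abs_of_nonneg (norm_nonneg a), mul_div_assoc, div_self (ne_of_gt hapos), mul_one]
  obtain ⟨u, hu1, hval⟩ := hau
  set F : ℂ → ℂ := fun x => (hz x + (c : ℂ) * u) / gz x with hF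
  -- F is DiffContOnCl on the ball
  have hder : DifferentiableOn ℂ F (ball (0 : ℂ) 1) := by
    have hhd : DifferentiableOn ℂ (fun x => deriv h x) (ball (0 : ℂ) 1) :=
      ((hh.analyticOnNhd isOpen_ball).deriv).differentiableOn
    have hgd : DifferentiableOn ℂ (fun x => deriv g x) (ball (0 : ℂ) 1) :=
      ((hg.analyticOnNhd isOpen_ball).deriv).differentiableOn
    have : DifferentiableOn ℂ (fun x => (deriv h x + (c : ℂ) * u) / deriv g x)
        (ball (0 : ℂ) 1) := by
      refine (hhd.add_const _).div hgd ?_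
      intro x hx
      rw [← hgz x hx]
      exact hgzne x (ball_subset_closedBall hx)
    refine this.congr ?_
    intro x hx
    simp [hF, hgz x hx, hhz x hx]
  have hcont : ContinuousOn F (closure (ball (0 : ℂ) 1)) := by
    rw [hclos]
    exact ((hhzc.add continuousOn_const).div hgzc hgzne)
  have hdc : DiffContOnCl ℂ F (ball (0 : ℂ) 1) := ⟨hder, hcont⟩
  have hbound : ∀ x ∈ frontier (ball (0 : ℂ) 1), ‖F x‖ ≤ 1 := by
    intro x hx
    rw [frontier_ball 0 one_ne_zero] at hx
    have hx1 : ‖x‖ = 1 := by simpa [mem_sphere_iff_norm] using hx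
    have hb := hbd' x hx1
    have hgpos : 0 < ‖gz x‖ := by
      have : 0 < ‖hz x‖ + c := by positivity
      linarith [norm_nonneg (hz x)]
    rw [hF]
    simp only [norm_div]
    rw [div_le_one hgpos]
    calc ‖hz x + (c : ℂ) * u‖ ≤ ‖hz x‖ + ‖(c : ℂ) * u‖ := norm_add_le _ _
      _ = ‖hz x‖ + c := by
          rw [norm_mul, hu1, mul_one, Complex.norm_real, Real.norm_eq_abs, abs_of_pos hc]
      _ ≤ ‖gz x‖ := by linarith
  have hzcl : z ∈ closure (ball (0 : ℂ) 1) := subset_closure hzb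
  have key : ‖F z‖ ≤ 1 :=
    Complex.norm_le_of_forall_mem_frontier_norm_le isBounded_ball hdc hbound hzcl
  have hgzz : gz z ≠ 0 := hgzne z (ball_subset_closedBall hzb)
  have hgpos : 0 < ‖gz z‖ := norm_pos_iff.mpr hgzz
  rw [hF] at key
  simp only [norm_div] at key
  rw [div_le_one hgpos] at key
  rw [← ha, hval] at key
  have h1 : ‖gz z‖ - ‖hz z‖ = |‖gz z‖ - ‖hz z‖| := by
    rw [abs_of_nonneg]; linarith [hsense z hzb]
  rw [← h1]
  simp only [← ha] at *
  linarith
end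

section
/- Let φ be continuous on the closed annulus {z : ρ ≤ |z| ≤ 1} (0 < ρ < 1), subharmonic in the open annulus, φ < 0 in the open annulus, and φ(t) = 0 for |t| = 1. If the radial derivative ∂φ/∂r exists at a point t with |t| = 1, then ∂φ/∂r(t) ≥ −2M(φ,ρ)/(ρ²(e^{1/ρ²−1} − 1)) > 0, where M(φ,ρ) = max_{|z|=ρ} φ(z) < 0. -/
open Real Filter Set


/-- The Laplacian of a real function on `ℂ ≅ ℝ²`, as the sum of the two pure second
directional derivatives in the directions `1` and `i`. -/
noncomputable def lapC (f : ℂ → ℝ) (z : ℂ) : ℝ :=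
  iteratedFDeriv ℝ 2 f z ![1, 1] + iteratedFDeriv ℝ 2 f z ![Complex.I, Complex.I]

lemma lapC_eq (f : ℂ → ℝ) (z : ℂ) :
    lapC f z = fderiv ℝ (fderiv ℝ f) z 1 1 + fderiv ℝ (fderiv ℝ f) z Complex.I Complex.I := by
  rw [lapC, iteratedFDeriv_two_apply, iteratedFDeriv_two_apply]
  simp

/-- Second derivative test at a local max. -/
lemma secondDirTest (f : ℂ → ℝ) (z₀ : ℂ) (v : ℂ) (hf : ContDiffAt ℝ 2 f z₀)
    (hmax : IsLocalMax f z₀) : fderiv ℝ (fderiv ℝ f) z₀ v v ≤ 0 := by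
  by_contra hpos
  push_neg at hpos
  -- open set where f is C²
  obtain ⟨u, hu, hfu⟩ := hf.contDiffOn (le_refl 2) (by simp)
  set U : Set ℂ := interior u with hU
  have hUo : IsOpen U := isOpen_interior
  have hz₀U : z₀ ∈ U := mem_interior_iff_mem_nhds.2 hu
  have hfU : ContDiffOn ℝ 2 f U := hfu.mono interior_subset
  -- derivative of f along the line
  have hline : ∀ s : ℝ, HasDerivAt (fun s : ℝ => z₀ + s • v) v s := by
    intro s
    simpa using ((hasDerivAt_id s).smul_const v).const_add z₀
  set g : ℝ → ℝ := fun s => f (z₀ + s • v) with hg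
  set g1 : ℝ → ℝ := fun s => fderiv ℝ f (z₀ + s • v) v with hg1
  have hgd : ∀ s : ℝ, z₀ + s • v ∈ U → HasDerivAt g (g1 s) s := by
    intro s hs
    have hdf : DifferentiableAt ℝ f (z₀ + s • v) :=
      (hfU.contDiffAt (hUo.mem_nhds hs)).differentiableAt two_ne_zero
    exact hdf.hasFDerivAt.comp_hasDerivAt s (hline s)
  -- derivative of g1 at 0
  have hDf : DifferentiableAt ℝ (fderiv ℝ f) z₀ :=
    (hf.fderiv_right (m := 1) (le_refl _)).differentiableAt one_ne_zero
  have h2 : HasDerivAt (fun s : ℝ => fderiv ℝ f (z₀ + s • v))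
      (fderiv ℝ (fderiv ℝ f) z₀ v) 0 := by
    have hd : HasFDerivAt (fderiv ℝ f) (fderiv ℝ (fderiv ℝ f) z₀) (z₀ + (0:ℝ) • v) := by
      simpa using hDf.hasFDerivAt
    simpa [Function.comp_def] using hd.comp_hasDerivAt 0 (hline 0)
  have h3 : HasDerivAt g1 (fderiv ℝ (fderiv ℝ f) z₀ v v) 0 := by
    have := (ContinuousLinearMap.apply ℝ ℝ v).hasFDerivAt.comp_hasDerivAt 0 h2
    simpa [Function.comp_def, hg1] using this
  -- fderiv f z₀ = 0
  have hg10 : g1 0 = 0 := by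
    simp [hg1, hmax.fderiv_eq_zero]
  -- eventually positive derivative on the right
  have hslope : Tendsto (slope g1 0) (nhdsWithin 0 {(0:ℝ)}ᶜ) (nhds (fderiv ℝ (fderiv ℝ f) z₀ v v)) :=
    hasDerivAt_iff_tendsto_slope.1 h3
  have hev1 : ∀ᶠ s in nhdsWithin 0 {(0:ℝ)}ᶜ, 0 < slope g1 0 s :=
    hslope.eventually (eventually_gt_nhds hpos)
  have hev1' : ∀ᶠ s in nhdsWithin (0:ℝ) (Ioi 0), 0 < g1 s := by
    have h := (hev1.filter_mono (nhdsWithin_mono _ (by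
      intro x hx; exact ne_of_gt hx))).and self_mem_nhdsWithin
    refine h.mono ?_
    rintro s ⟨hs1, hs2⟩
    have hs2' : (0:ℝ) < s := hs2
    have : slope g1 0 s = g1 s / s := by simp [slope_def_field, hg10]
    rw [this] at hs1
    have := mul_pos hs1 hs2'
    rwa [div_mul_cancel₀ _ (ne_of_gt hs2')] at this
  -- eventually in U and local max along line
  have hlinecont : Tendsto (fun s : ℝ => z₀ + s • v) (nhds 0) (nhds z₀) := by
    have : Continuous (fun s : ℝ => z₀ + s • v) := by continuity
    simpa using this.tendsto 0
  have hev2 : ∀ᶠ s in nhds (0:ℝ), z₀ + s • v ∈ U := hlinecont.eventually (hUo.mem_nhds hz₀U)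
  have hev3 : ∀ᶠ s in nhds (0:ℝ), g s ≤ g 0 := by
    have := hlinecont.eventually hmax
    simpa [hg] using this
  obtain ⟨δ₁, hδ₁, hδ₁'⟩ := Metric.eventually_nhds_iff.1 (hev2.and hev3)
  have hev1'' : ∀ᶠ s in nhds (0:ℝ), s ∈ Ioi (0:ℝ) → 0 < g1 s :=
    eventually_nhdsWithin_iff.1 hev1'
  obtain ⟨δ₂, hδ₂, hδ₂'⟩ := Metric.eventually_nhds_iff.1 hev1''
  set δ := min δ₁ δ₂ / 2 with hδdef
  have hδpos : 0 < δ := by positivity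
  have hδlt1 : δ < δ₁ := by
    have : min δ₁ δ₂ ≤ δ₁ := min_le_left _ _
    calc δ < min δ₁ δ₂ := by rw [hδdef]; linarith [lt_min hδ₁ hδ₂]
    _ ≤ δ₁ := this
  have hδlt2 : δ < δ₂ := by
    have : min δ₁ δ₂ ≤ δ₂ := min_le_right _ _
    calc δ < min δ₁ δ₂ := by rw [hδdef]; linarith [lt_min hδ₁ hδ₂]
    _ ≤ δ₂ := this
  -- strict mono on [0, δ]
  have hmono : StrictMonoOn g (Icc 0 δ) := by
    apply strictMonoOn_of_deriv_pos (convex_Icc 0 δ)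
    · intro s hs
      have hsU : z₀ + s • v ∈ U := by
        refine (hδ₁' (y := s) ?_).1
        rw [Real.dist_eq, sub_zero, abs_of_nonneg hs.1]
        exact lt_of_le_of_lt hs.2 hδlt1
      exact (hgd s hsU).continuousAt.continuousWithinAt
    · intro s hs
      rw [interior_Icc] at hs
      have hsU : z₀ + s • v ∈ U := by
        refine (hδ₁' (y := s) ?_).1
        rw [Real.dist_eq, sub_zero, abs_of_nonneg hs.1.le]
        exact lt_trans hs.2 hδlt1
      rw [(hgd s hsU).deriv]
      refine hδ₂' (y := s) ?_ hs.1
      rw [Real.dist_eq, sub_zero, abs_of_nonneg hs.1.le]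
      exact lt_trans hs.2 hδlt2
  have h1 : g 0 < g δ := hmono (by constructor <;> [rfl; exact hδpos.le] ) ⟨hδpos.le, le_rfl⟩ hδpos
  have h2' : g δ ≤ g 0 := by
    refine (hδ₁' (y := δ) ?_).2
    rw [Real.dist_eq, sub_zero, abs_of_nonneg hδpos.le]
    exact hδlt1
  linarith

lemma lapC_add (f g : ℂ → ℝ) (z : ℂ) (hf : ContDiffAt ℝ 2 f z) (hg : ContDiffAt ℝ 2 g z) :
    lapC (fun w => f w + g w) z = lapC f z + lapC g z := by
  have hev : (fun w => fderiv ℝ (fun w => f w + g w) w) =ᶠ[nhds z]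
      (fun w => fderiv ℝ f w + fderiv ℝ g w) := by
    filter_upwards [hf.eventually (by simp), hg.eventually (by simp)] with w hfw hgw
    exact fderiv_fun_add (hfw.differentiableAt two_ne_zero) (hgw.differentiableAt two_ne_zero)
  have hf' : DifferentiableAt ℝ (fderiv ℝ f) z :=
    (hf.fderiv_right (m := 1) (le_refl _)).differentiableAt one_ne_zero
  have hg' : DifferentiableAt ℝ (fderiv ℝ g) z :=
    (hg.fderiv_right (m := 1) (le_refl _)).differentiableAt one_ne_zero
  have key : fderiv ℝ (fderiv ℝ (fun w => f w + g w)) z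
      = fderiv ℝ (fderiv ℝ f) z + fderiv ℝ (fderiv ℝ g) z := by
    rw [hev.fderiv_eq]
    exact (hf'.hasFDerivAt.add hg'.hasFDerivAt).fderiv
  rw [lapC_eq, lapC_eq, lapC_eq, key]
  simp only [ContinuousLinearMap.add_apply]
  ring

noncomputable def NN : ℂ → ℝ := fun w => w.re ^ 2 + w.im ^ 2

noncomputable def LNN (w : ℂ) : ℂ →L[ℝ] ℝ :=
  (2 * w.re) • Complex.reCLM + (2 * w.im) • Complex.imCLM

lemma hasFDerivAt_NN (w : ℂ) : HasFDerivAt NN (LNN w) w := by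
  have h1 : HasFDerivAt (fun w : ℂ => w.re ^ 2) ((2 * w.re) • Complex.reCLM) w := by
    have := (Complex.reCLM.hasFDerivAt (x := w)).fun_mul (Complex.reCLM.hasFDerivAt (x := w))
    have heq : (2 * w.re) • Complex.reCLM
        = Complex.reCLM w • Complex.reCLM + Complex.reCLM w • Complex.reCLM := by
      simp [two_smul, two_mul, add_smul]
    rw [heq]
    simpa [sq] using this
  have h2 : HasFDerivAt (fun w : ℂ => w.im ^ 2) ((2 * w.im) • Complex.imCLM) w := by
    have := (Complex.imCLM.hasFDerivAt (x := w)).fun_mul (Complex.imCLM.hasFDerivAt (x := w))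
    have heq : (2 * w.im) • Complex.imCLM
        = Complex.imCLM w • Complex.imCLM + Complex.imCLM w • Complex.imCLM := by
      simp [two_smul, two_mul, add_smul]
    rw [heq]
    simpa [sq] using this
  exact h1.add h2

lemma LNN_apply (w v : ℂ) : LNN w v = 2 * w.re * v.re + 2 * w.im * v.im := by
  simp [LNN]

lemma NN_eq_norm_sq (z : ℂ) : NN z = ‖z‖ ^ 2 := by
  rw [NN, Complex.sq_norm, Complex.normSq_apply]
  ring

lemma NN_pos {z : ℂ} (hz : z ≠ 0) : 0 < NN z := by
  rw [NN_eq_norm_sq]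
  have : ‖z‖ ≠ 0 := norm_ne_zero_iff.2 hz
  positivity

noncomputable def psiF (a b c0 : ℝ) : ℂ → ℝ :=
  fun w => a * Real.log (NN w) + b * NN w + c0

lemma psiF_contDiffAt (a b c0 : ℝ) {z : ℂ} (hz : z ≠ 0) : ContDiffAt ℝ 2 (psiF a b c0) z := by
  have hN : ContDiff ℝ 2 NN := by
    have : ContDiff ℝ 2 (fun w : ℂ => w.re ^ 2 + w.im ^ 2) :=
      (Complex.reCLM.contDiff.pow 2).add (Complex.imCLM.contDiff.pow 2)
    exact this
  have hNz : NN z ≠ 0 := (NN_pos hz).ne'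
  exact ((contDiffAt_const.mul (hN.contDiffAt.log hNz)).add
    (contDiffAt_const.mul hN.contDiffAt)).add contDiffAt_const

lemma psiF_hasFDerivAt (a b c0 : ℝ) {w : ℂ} (hw : w ≠ 0) :
    HasFDerivAt (psiF a b c0) ((a * (NN w)⁻¹ + b) • LNN w) w := by
  have hNz : NN w ≠ 0 := (NN_pos hw).ne'
  have hlog : HasFDerivAt (fun w => Real.log (NN w)) ((NN w)⁻¹ • LNN w) w :=
    (hasFDerivAt_NN w).log hNz
  have h := ((hlog.const_mul a).add ((hasFDerivAt_NN w).const_mul b)).add_const c0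
  have heq : a • ((NN w)⁻¹ • LNN w) + b • LNN w = (a * (NN w)⁻¹ + b) • LNN w := by
    rw [smul_smul, add_smul]
  rw [← heq]
  exact h

lemma eval_fderiv (F : ℂ → ℂ →L[ℝ] ℝ) {z : ℂ} (hF : DifferentiableAt ℝ F z) (v u : ℂ) :
    fderiv ℝ (fun w => F w v) z u = (fderiv ℝ F z u) v := by
  have h := ((ContinuousLinearMap.apply ℝ ℝ v).hasFDerivAt.comp z hF.hasFDerivAt).fderiv
  have : (fun w => F w v) = (ContinuousLinearMap.apply ℝ ℝ v) ∘ F := rfl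
  rw [this, h]
  simp

lemma psiF_lapC (a b c0 : ℝ) {z : ℂ} (hz : z ≠ 0) : lapC (psiF a b c0) z = 4 * b := by
  have hNz : NN z ≠ 0 := (NN_pos hz).ne'
  set D : ℂ → ℂ →L[ℝ] ℝ := fun w => (a * (NN w)⁻¹ + b) • LNN w with hD
  have hev : (fun w => fderiv ℝ (psiF a b c0) w) =ᶠ[nhds z] D := by
    filter_upwards [isOpen_ne.mem_nhds hz] with w hw
    exact (psiF_hasFDerivAt a b c0 hw).fderiv
  -- differentiability of D
  have hNd : ∀ w : ℂ, DifferentiableAt ℝ NN w := fun w => (hasFDerivAt_NN w).differentiableAt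
  have hsd : DifferentiableAt ℝ (fun w => a * (NN w)⁻¹ + b) z :=
    (((hNd z).inv hNz).const_mul a).add_const b
  have hLNNd : DifferentiableAt ℝ LNN z := by
    apply DifferentiableAt.add
    · exact (((Complex.reCLM.differentiable.differentiableAt).const_mul 2)).smul_const _
    · exact (((Complex.imCLM.differentiable.differentiableAt).const_mul 2)).smul_const _
  have hDdiff : DifferentiableAt ℝ D z := hsd.smul hLNNd
  -- value of the second derivative in direction v
  have key : ∀ v : ℂ, fderiv ℝ (fderiv ℝ (psiF a b c0)) z v v
      = (a * (NN z)⁻¹ + b) * (2 * v.re * v.re + 2 * v.im * v.im)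
        + (2 * z.re * v.re + 2 * z.im * v.im) *
          ((a * -((NN z) ^ 2)⁻¹) * (2 * z.re * v.re + 2 * z.im * v.im)) := by
    intro v
    have h1 : fderiv ℝ (fderiv ℝ (psiF a b c0)) z = fderiv ℝ D z := hev.fderiv_eq
    rw [h1, ← eval_fderiv D hDdiff v v]
    -- explicit scalar form
    have hfun : (fun w => D w v)
        = fun w => (a * (NN w)⁻¹ + b) * (2 * w.re * v.re + 2 * w.im * v.im) := by
      funext w
      simp [hD, LNN_apply]
    rw [hfun]
    -- derivative of the scalar factor
    have hinv : HasFDerivAt (fun w => (NN w)⁻¹) ((-((NN z) ^ 2)⁻¹) • LNN z) z :=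
      (hasDerivAt_inv hNz).comp_hasFDerivAt z (hasFDerivAt_NN z)
    have hs : HasFDerivAt (fun w => a * (NN w)⁻¹ + b)
        (a • ((-((NN z) ^ 2)⁻¹) • LNN z)) z := (hinv.const_mul a).add_const b
    have hlin : HasFDerivAt (fun w : ℂ => 2 * w.re * v.re + 2 * w.im * v.im)
        (v.re • ((2:ℝ) • (Complex.reCLM : ℂ →L[ℝ] ℝ))
          + v.im • ((2:ℝ) • (Complex.imCLM : ℂ →L[ℝ] ℝ))) z := by
      apply HasFDerivAt.add
      · exact ((Complex.reCLM.hasFDerivAt.const_mul 2)).mul_const v.re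
      · exact ((Complex.imCLM.hasFDerivAt.const_mul 2)).mul_const v.im
    have hE := hs.fun_mul hlin
    rw [hE.fderiv]
    simp [LNN_apply]
    ring
  rw [lapC_eq, key 1, key Complex.I]
  simp only [Complex.one_re, Complex.one_im, Complex.I_re, Complex.I_im]
  have hNN : NN z = z.re ^ 2 + z.im ^ 2 := rfl
  field_simp
  rw [hNN]
  ring

lemma maxPrinciple (ρ : ℝ) (hρ0 : 0 < ρ) (hρ1 : ρ < 1) (φ : ℂ → ℝ)
    (hcont : ContinuousOn φ {z : ℂ | ρ ≤ ‖z‖ ∧ ‖z‖ ≤ 1})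
    (hC2 : ContDiffOn ℝ 2 φ {z : ℂ | ρ < ‖z‖ ∧ ‖z‖ < 1})
    (hsub : ∀ z : ℂ, ρ < ‖z‖ → ‖z‖ < 1 → 0 ≤ lapC φ z)
    (hzero : ∀ t : ℂ, ‖t‖ = 1 → φ t = 0)
    (M c : ℝ) (hMbound : ∀ z : ℂ, ‖z‖ = ρ → φ z ≤ M)
    (hc : c * Real.log ρ = M) (ε : ℝ) (hε : 0 < ε) :
    ∀ z : ℂ, ρ ≤ ‖z‖ → ‖z‖ ≤ 1 → φ z + psiF (-c/2) ε (-ε) z ≤ 0 := by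
  set ψ := psiF (-c/2) ε (-ε) with hψ
  set u : ℂ → ℝ := fun z => φ z + ψ z with hu
  set K : Set ℂ := {z : ℂ | ρ ≤ ‖z‖ ∧ ‖z‖ ≤ 1} with hK
  have hKne : ∀ z ∈ K, z ≠ 0 := by
    intro z hz h0
    have h1 : ρ ≤ ‖z‖ := hz.1
    rw [h0, norm_zero] at h1
    linarith
  -- ψ values on the circles
  have hψval : ∀ z : ℂ, z ≠ 0 → ψ z = -c * Real.log ‖z‖ + ε * (‖z‖ ^ 2 - 1) := by
    intro z h0
    have hn : ‖z‖ ≠ 0 := norm_ne_zero_iff.2 h0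
    rw [hψ, psiF, NN_eq_norm_sq, Real.log_pow]
    push_cast
    ring
  -- K is compact
  have hKclosed : IsClosed K := by
    have : K = (fun z : ℂ => ‖z‖) ⁻¹' (Icc ρ 1) := rfl
    rw [this]
    exact isClosed_Icc.preimage continuous_norm
  have hKcomp : IsCompact K := by
    refine (isCompact_closedBall (0:ℂ) 1).of_isClosed_subset hKclosed ?_
    intro z hz
    rw [Metric.mem_closedBall, dist_zero_right]
    exact hz.2
  have hKnonempty : K.Nonempty := by
    refine ⟨Complex.I, ⟨?_, ?_⟩⟩
    · rw [Complex.norm_I]; linarith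
    · rw [Complex.norm_I]
  -- u is continuous on K
  have hucont : ContinuousOn u K := by
    refine hcont.add ?_
    intro z hz
    exact ((psiF_contDiffAt _ _ _ (hKne z hz)).continuousAt).continuousWithinAt
  obtain ⟨z₀, hz₀K, hmax⟩ := hKcomp.exists_isMaxOn hKnonempty hucont
  -- the max point is on the boundary
  have hbound : u z₀ ≤ 0 := by
    rcases eq_or_lt_of_le hz₀K.1 with hin | hin
    · -- inner circle
      have h0 : z₀ ≠ 0 := hKne z₀ hz₀K
      show φ z₀ + ψ z₀ ≤ 0
      have := hMbound z₀ hin.symm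
      rw [hψval z₀ h0, ← hin]
      have hsq : ρ ^ 2 - 1 ≤ 0 := by nlinarith
      have h3 : ε * (ρ ^ 2 - 1) ≤ 0 := mul_nonpos_of_nonneg_of_nonpos hε.le hsq
      linarith [hc, this]
    rcases eq_or_lt_of_le hz₀K.2 with hout | hout
    · -- outer circle
      have h0 : z₀ ≠ 0 := hKne z₀ hz₀K
      show φ z₀ + ψ z₀ ≤ 0
      rw [hψval z₀ h0, hout, hzero z₀ hout]
      simp
    -- interior: contradiction
    exfalso
    have hAopen : IsOpen {z : ℂ | ρ < ‖z‖ ∧ ‖z‖ < 1} := by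
      have : {z : ℂ | ρ < ‖z‖ ∧ ‖z‖ < 1} = (fun z : ℂ => ‖z‖) ⁻¹' (Ioo ρ 1) := rfl
      rw [this]
      exact isOpen_Ioo.preimage continuous_norm
    have hz₀A : z₀ ∈ {z : ℂ | ρ < ‖z‖ ∧ ‖z‖ < 1} := ⟨hin, hout⟩
    have hAnhds : {z : ℂ | ρ < ‖z‖ ∧ ‖z‖ < 1} ∈ nhds z₀ := hAopen.mem_nhds hz₀A
    have hKnhds : K ∈ nhds z₀ := by
      refine Filter.mem_of_superset hAnhds ?_
      intro z hz
      exact ⟨hz.1.le, hz.2.le⟩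
    have hlocmax : IsLocalMax u z₀ := hmax.isLocalMax hKnhds
    have hφ2 : ContDiffAt ℝ 2 φ z₀ := hC2.contDiffAt hAnhds
    have hψ2 : ContDiffAt ℝ 2 ψ z₀ := psiF_contDiffAt _ _ _ (hKne z₀ hz₀K)
    have hu2 : ContDiffAt ℝ 2 u z₀ := hφ2.add hψ2
    have htest : lapC u z₀ ≤ 0 := by
      rw [lapC_eq]
      have h1 := secondDirTest u z₀ 1 hu2 hlocmax
      have h2 := secondDirTest u z₀ Complex.I hu2 hlocmax
      linarith
    have hadd : lapC u z₀ = lapC φ z₀ + lapC ψ z₀ := lapC_add φ ψ z₀ hφ2 hψ2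
    have hψlap : lapC ψ z₀ = 4 * ε := psiF_lapC _ _ _ (hKne z₀ hz₀K)
    have hφlap := hsub z₀ hin hout
    rw [hadd, hψlap] at htest
    linarith
  intro z hz1 hz2
  exact le_trans (hmax ⟨hz1, hz2⟩) hbound

lemma comparison (ρ : ℝ) (hρ0 : 0 < ρ) (hρ1 : ρ < 1) (φ : ℂ → ℝ)
    (hcont : ContinuousOn φ {z : ℂ | ρ ≤ ‖z‖ ∧ ‖z‖ ≤ 1})
    (hC2 : ContDiffOn ℝ 2 φ {z : ℂ | ρ < ‖z‖ ∧ ‖z‖ < 1})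
    (hsub : ∀ z : ℂ, ρ < ‖z‖ → ‖z‖ < 1 → 0 ≤ lapC φ z)
    (hzero : ∀ t : ℂ, ‖t‖ = 1 → φ t = 0)
    (M c : ℝ) (hMbound : ∀ z : ℂ, ‖z‖ = ρ → φ z ≤ M)
    (hc : c * Real.log ρ = M) :
    ∀ z : ℂ, ρ ≤ ‖z‖ → ‖z‖ ≤ 1 → φ z ≤ c * Real.log ‖z‖ := by
  intro z hz1 hz2
  have h0 : z ≠ 0 := by
    intro h
    rw [h, norm_zero] at hz1
    linarith
  have hn : ‖z‖ ≠ 0 := norm_ne_zero_iff.2 h0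
  refine le_of_forall_pos_le_add ?_
  intro ε hε
  have h := maxPrinciple ρ hρ0 hρ1 φ hcont hC2 hsub hzero M c hMbound hc ε hε z hz1 hz2
  have hψval : psiF (-c/2) ε (-ε) z = -c * Real.log ‖z‖ + ε * (‖z‖ ^ 2 - 1) := by
    rw [psiF, NN_eq_norm_sq, Real.log_pow]
    push_cast
    ring
  rw [hψval] at h
  nlinarith [sq_nonneg ‖z‖]

lemma Fineq : ∀ u : ℝ, 0 ≤ u → (1 + u) * Real.log (1 + u) ≤ Real.exp u - 1 := by
  set F : ℝ → ℝ := fun u => Real.exp u - 1 - (1 + u) * Real.log (1 + u) with hF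
  have hder : ∀ x : ℝ, 0 ≤ x → HasDerivAt F (Real.exp x - (Real.log (1 + x) + 1)) x := by
    intro x hx
    have hx1 : (1 : ℝ) + x ≠ 0 := by linarith
    have h1 : HasDerivAt (fun u : ℝ => 1 + u) 1 x := (hasDerivAt_id x).const_add 1
    have h2 : HasDerivAt (fun u : ℝ => Real.log (1 + u)) ((1 + x)⁻¹) x := by
      have := (Real.hasDerivAt_log hx1).comp x h1
      simpa [Function.comp_def] using this
    have h3 : HasDerivAt (fun u : ℝ => (1 + u) * Real.log (1 + u))
        (1 * Real.log (1 + x) + (1 + x) * (1 + x)⁻¹) x := h1.mul h2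
    have h4 := ((Real.hasDerivAt_exp x).sub_const 1).sub h3
    have : 1 * Real.log (1 + x) + (1 + x) * (1 + x)⁻¹ = Real.log (1 + x) + 1 := by
      field_simp
    rw [this] at h4
    exact h4
  have hmono : MonotoneOn F (Ici 0) := by
    apply monotoneOn_of_deriv_nonneg (convex_Ici 0)
    · intro x hx
      exact (hder x hx).continuousAt.continuousWithinAt
    · intro x hx
      rw [interior_Ici] at hx
      exact ((hder x (le_of_lt hx)).differentiableAt).differentiableWithinAt
    · intro x hx
      rw [interior_Ici] at hx
      rw [(hder x hx.le).deriv]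
      have h5 : x + 1 ≤ Real.exp x := Real.add_one_le_exp x
      have h6 : Real.log (1 + x) ≤ x := by
        have hx' : 0 < x := hx
        have := Real.log_le_sub_one_of_pos (x := 1 + x) (by linarith)
        linarith
      linarith
  intro u hu
  have h := hmono (self_mem_Ici) hu hu
  have hF0 : F 0 = 0 := by simp [hF]
  rw [hF0] at h
  simp only [hF] at h
  linarith

lemma keyIneq (ρ : ℝ) (hρ0 : 0 < ρ) (hρ1 : ρ < 1) :
    -(2 * Real.log ρ) ≤ ρ ^ 2 * (Real.exp (1 / ρ ^ 2 - 1) - 1) := by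
  have hρ2 : (0:ℝ) < ρ ^ 2 := by positivity
  have hρ2lt : ρ ^ 2 < 1 := by nlinarith
  have hu : 0 ≤ 1 / ρ ^ 2 - 1 := by
    rw [sub_nonneg, le_div_iff₀ hρ2]
    linarith
  have h := Fineq (1 / ρ ^ 2 - 1) hu
  have h1 : (1 : ℝ) + (1 / ρ ^ 2 - 1) = 1 / ρ ^ 2 := by ring
  rw [h1] at h
  have hlog : Real.log (1 / ρ ^ 2) = -(2 * Real.log ρ) := by
    rw [one_div, Real.log_inv, Real.log_pow]
    push_cast
    ring
  rw [hlog] at h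
  -- h : (1/ρ^2) * (-(2 log ρ)) ≤ exp (1/ρ^2-1) - 1
  have h2 := mul_le_mul_of_nonneg_left h (le_of_lt hρ2)
  have h3 : ρ ^ 2 * (1 / ρ ^ 2 * -(2 * Real.log ρ)) = -(2 * Real.log ρ) := by
    field_simp
  rw [h3] at h2
  linarith

/-- Quantitative Hopf-type lemma: `φ` continuous on the closed annulus `{ρ ≤ |z| ≤ 1}`
(`0 < ρ < 1`), subharmonic in the open annulus, `φ < 0` in `{ρ ≤ |z| < 1}`, `φ = 0` on the
unit circle. If the radial derivative `∂φ/∂r` exists at `t` with `|t| = 1`, then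
`∂φ/∂r(t) ≥ -2M/(ρ²(e^{1/ρ² - 1} - 1)) > 0`, where `M = max_{|z|=ρ} φ < 0`. -/
theorem stmt13 (ρ : ℝ) (hρ0 : 0 < ρ) (hρ1 : ρ < 1) (φ : ℂ → ℝ)
    (hcont : ContinuousOn φ {z : ℂ | ρ ≤ ‖z‖ ∧ ‖z‖ ≤ 1})
    (hC2 : ContDiffOn ℝ 2 φ {z : ℂ | ρ < ‖z‖ ∧ ‖z‖ < 1})
    (hsub : ∀ z : ℂ, ρ < ‖z‖ → ‖z‖ < 1 → 0 ≤ lapC φ z)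
    (hneg : ∀ z : ℂ, ρ ≤ ‖z‖ → ‖z‖ < 1 → φ z < 0)
    (hzero : ∀ t : ℂ, ‖t‖ = 1 → φ t = 0)
    (t : ℂ) (ht : ‖t‖ = 1) (Dr : ℝ)
    (hDr : HasDerivWithinAt (fun r : ℝ => φ (r • t)) Dr (Set.Icc ρ 1) 1)
    (M : ℝ) (hM : IsGreatest (φ '' Metric.sphere (0 : ℂ) ρ) M) :
    -2 * M / (ρ ^ 2 * (Real.exp (1 / ρ ^ 2 - 1) - 1)) ≤ Dr ∧
      0 < -2 * M / (ρ ^ 2 * (Real.exp (1 / ρ ^ 2 - 1) - 1)) := by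
  -- M is negative
  have hMneg : M < 0 := by
    obtain ⟨z₁, hz₁, hMz⟩ := hM.1
    rw [mem_sphere_iff_norm, sub_zero] at hz₁
    have := hneg z₁ (le_of_eq hz₁.symm) (by rw [hz₁]; exact hρ1)
    rw [hMz] at this
    exact this
  have hMbound : ∀ z : ℂ, ‖z‖ = ρ → φ z ≤ M := by
    intro z hz
    exact hM.2 ⟨z, by rwa [mem_sphere_iff_norm, sub_zero], rfl⟩
  have hlogneg : Real.log ρ < 0 := Real.log_neg hρ0 hρ1
  set c : ℝ := M / Real.log ρ with hcdef
  have hc : c * Real.log ρ = M := div_mul_cancel₀ M (ne_of_lt hlogneg)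
  have hcpos : 0 < c := div_pos_of_neg_of_neg hMneg hlogneg
  -- comparison with the harmonic function
  have hcomp := comparison ρ hρ0 hρ1 φ hcont hC2 hsub hzero M c hMbound hc
  -- the slope limit argument: Dr ≥ c
  set g : ℝ → ℝ := fun r => φ (r • t) with hg
  have hg1 : g 1 = 0 := by
    rw [hg]
    simp only [one_smul]
    exact hzero t ht
  have hslope : Tendsto (slope g 1) (nhdsWithin 1 (Set.Ico ρ 1)) (nhds Dr) := by
    have := hasDerivWithinAt_iff_tendsto_slope.1 hDr
    rwa [Set.Icc_sdiff_right] at this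
  have hlogslope : Tendsto (fun r => c * slope Real.log 1 r)
      (nhdsWithin 1 (Set.Ico ρ 1)) (nhds (c * 1)) := by
    have h1 : Tendsto (slope Real.log 1) (nhdsWithin 1 {(1:ℝ)}ᶜ) (nhds 1) := by
      have := hasDerivAt_iff_tendsto_slope.1 (Real.hasDerivAt_log one_ne_zero)
      simpa using this
    exact (h1.mono_left (nhdsWithin_mono 1 (fun r hr => ne_of_lt hr.2))).const_mul c
  have hle : ∀ r ∈ Set.Ico ρ 1, c * slope Real.log 1 r ≤ slope g 1 r := by
    intro r hr
    have hr0 : 0 < r := lt_of_lt_of_le hρ0 hr.1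
    have hnorm : ‖r • t‖ = r := by
      rw [norm_smul, ht, Real.norm_eq_abs, abs_of_pos hr0, mul_one]
    have hφr : φ (r • t) ≤ c * Real.log r := by
      have := hcomp (r • t) (by rw [hnorm]; exact hr.1) (by rw [hnorm]; exact hr.2.le)
      rwa [hnorm] at this
    have hden : r - 1 < 0 := by linarith [hr.2]
    rw [slope_def_field, slope_def_field, hg1, Real.log_one]
    have hnum : g r - c * Real.log r ≤ 0 := by
      rw [hg]
      linarith [hφr]
    have hq : 0 ≤ (g r - c * Real.log r) / (r - 1) :=
      div_nonneg_iff.2 (Or.inr ⟨hnum, hden.le⟩)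
    have hexp : (g r - c * Real.log r) / (r - 1) = (g r - 0) / (r - 1) - c * ((Real.log r - 0) / (r - 1)) := by
      field_simp
      ring
    rw [hexp] at hq
    linarith
  have hneBot : (nhdsWithin (1:ℝ) (Set.Ico ρ 1)).NeBot := by
    rw [← mem_closure_iff_nhdsWithin_neBot, closure_Ico (ne_of_lt hρ1)]
    exact ⟨le_of_lt hρ1, le_rfl⟩
  have hDrge : c * 1 ≤ Dr :=
    le_of_tendsto_of_tendsto hlogslope hslope (eventually_nhdsWithin_of_forall hle)
  rw [mul_one] at hDrge
  -- the denominator is positive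
  have hE : 0 < Real.exp (1 / ρ ^ 2 - 1) - 1 := by
    have h1 : (0:ℝ) < 1 / ρ ^ 2 - 1 := by
      rw [sub_pos, lt_div_iff₀ (by positivity)]
      nlinarith
    have h2 : (1:ℝ) < Real.exp (1 / ρ ^ 2 - 1) := Real.one_lt_exp_iff.2 h1
    linarith
  have hden : 0 < ρ ^ 2 * (Real.exp (1 / ρ ^ 2 - 1) - 1) := by positivity
  constructor
  · -- -2M / denom ≤ c ≤ Dr
    refine le_trans ?_ hDrge
    have hrw : c = -M / -Real.log ρ := by
      rw [hcdef, neg_div_neg_eq]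
    rw [hrw, div_le_div_iff₀ hden (by linarith)]
    have hkey := keyIneq ρ hρ0 hρ1
    nlinarith [hMneg, hkey, hlogneg]
  · apply div_pos (by linarith) hden
end
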